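/- Every proper edge-coloring of the complete graph K_5 on five vertices contains a rainbow path with 4 edges. -/
import Mathlib


open SimpleGraph Finset

/-- `c` is a proper edge-coloring of `G`: distinct edges sharing a vertex get distinct colors. -/
def IsProperEdgeColoring {V β : Type*} (G : SimpleGraph V) (c : Sym2 V → β) : Prop :=
  ∀ ⦃e₁ e₂ : Sym2 V⦄, e₁ ∈ G.edgeSet → e₂ ∈ G.edgeSet → e₁ ≠ e₂ →
    (∃ v, v ∈ e₁ ∧ v ∈ e₂) → c e₁ ≠ c e₂

/-- `G` contains a copy of `F` (as a subgraph). -/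
def Contains {α V : Type*} (F : SimpleGraph α) (G : SimpleGraph V) : Prop :=
  ∃ f : α ↪ V, ∀ ⦃a b⦄, F.Adj a b → G.Adj (f a) (f b)

/-- `G`, edge-colored by `c`, contains a rainbow copy of `F`:
a copy of `F` all of whose edges receive distinct colors. -/
def HasRainbowCopy {α V β : Type*} (F : SimpleGraph α) (G : SimpleGraph V)
    (c : Sym2 V → β) : Prop :=
  ∃ f : α ↪ V, (∀ ⦃a b⦄, F.Adj a b → G.Adj (f a) (f b)) ∧
    ∀ e₁ ∈ F.edgeSet, ∀ e₂ ∈ F.edgeSet, c (e₁.map ⇑f) = c (e₂.map ⇑f) → e₁ = e₂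

/-- The set of edge-counts of `n`-vertex graphs admitting a proper edge-coloring
with no rainbow copy of `F`; its greatest element is the rainbow Turán number `ex*(n,F)`. -/
def rainbowExSet (n : ℕ) {α : Type*} (F : SimpleGraph α) : Set ℕ :=
  {m | ∃ (G : SimpleGraph (Fin n)) (c : Sym2 (Fin n) → ℕ),
    IsProperEdgeColoring G c ∧ ¬ HasRainbowCopy F G c ∧ G.edgeSet.ncard = m}

/-- The set of edge-counts of `n`-vertex `F`-free graphs; its greatest element
is the Turán number `ex(n,F)`. -/
def exSet (n : ℕ) {α : Type*} (F : SimpleGraph α) : Set ℕ :=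
  {m | ∃ G : SimpleGraph (Fin n), ¬ Contains F G ∧ G.edgeSet.ncard = m}

/-- The matching `M_k` with `k` edges: vertices `2i` and `2i+1` are matched. -/
def matchingGraph (k : ℕ) : SimpleGraph (Fin (2 * k)) :=
  SimpleGraph.fromRel (fun a b => (a : ℕ) / 2 = (b : ℕ) / 2)

/-- The forest of `k` vertex-disjoint stars where the `i`-th star has `a i` edges
(the vertex `⟨i, 0⟩` being the center of the `i`-th star). -/
def starForest {k : ℕ} (a : Fin k → ℕ) : SimpleGraph (Σ i, Fin (a i + 1)) :=
  SimpleGraph.fromRel (fun x y => x.1 = y.1 ∧ (x.2 : ℕ) = 0)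


/-! ### Auxiliary data for the proof of `K5_rainbow_P4` -/

/-- The 10 edges of `K₅`, as ordered pairs of endpoints. -/
def ev : Fin 10 → Fin 5 × Fin 5 := ![(0, 1), (0, 2), (0, 3), (0, 4), (1, 2), (1, 3), (1, 4), (2, 3), (2, 4), (3, 4)]
def ed (j : Fin 10) : Sym2 (Fin 5) := s((ev j).1, (ev j).2)
/-- The 15 unordered pairs of disjoint edges of `K₅`. -/
def pet1 : Fin 15 → Fin 10 := ![0, 0, 0, 1, 1, 1, 2, 2, 2, 3, 3, 3, 4, 5, 6]
def pet2 : Fin 15 → Fin 10 := ![7, 8, 9, 5, 6, 9, 4, 6, 8, 4, 5, 7, 9, 8, 7]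
/-- The 60 Hamiltonian paths of `K₅` (up to reversal): vertex sequences. -/
def pv : Fin 60 → Fin 5 → Fin 5 := ![![0, 1, 2, 3, 4], ![0, 1, 2, 4, 3], ![0, 1, 3, 2, 4], ![0, 1, 3, 4, 2], ![0, 1, 4, 2, 3], ![0, 1, 4, 3, 2], ![0, 2, 1, 3, 4], ![0, 2, 1, 4, 3], ![0, 2, 3, 1, 4], ![0, 2, 3, 4, 1], ![0, 2, 4, 1, 3], ![0, 2, 4, 3, 1], ![0, 3, 1, 2, 4], ![0, 3, 1, 4, 2], ![0, 3, 2, 1, 4], ![0, 3, 2, 4, 1], ![0, 3, 4, 1, 2], ![0, 3, 4, 2, 1], ![0, 4, 1, 2, 3], ![0, 4, 1, 3, 2], ![0, 4, 2, 1, 3], ![0, 4, 2, 3, 1], ![0, 4, 3, 1, 2], ![0, 4, 3, 2, 1], ![1, 0, 2, 3, 4], ![1, 0, 2, 4, 3], ![1, 0, 3, 2, 4], ![1, 0, 3, 4, 2], ![1, 0, 4, 2, 3], ![1, 0, 4, 3, 2], ![1, 2, 0, 3, 4], ![1, 2, 0, 4, 3], ![1, 2, 3, 0, 4], ![1, 2,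 4, 0, 3], ![1, 3, 0, 2, 4], ![1, 3, 0, 4, 2], ![1, 3, 2, 0, 4], ![1, 3, 4, 0, 2], ![1, 4, 0, 2, 3], ![1, 4, 0, 3, 2], ![1, 4, 2, 0, 3], ![1, 4, 3, 0, 2], ![2, 0, 1, 3, 4], ![2, 0, 1, 4, 3], ![2, 0, 3, 1, 4], ![2, 0, 4, 1, 3], ![2, 1, 0, 3, 4], ![2, 1, 0, 4, 3], ![2, 1, 3, 0, 4], ![2, 1, 4, 0, 3], ![2, 3, 0, 1, 4], ![2, 3, 1, 0, 4], ![2, 4, 0, 1, 3], ![2, 4, 1, 0, 3], ![3, 0, 1, 2, 4], ![3, 0, 2, 1, 4], ![3, 1, 0, 2, 4], ![3, 1, 2, 0, 4], ![3, 2, 0, 1, 4], ![3, 2, 1, 0, 4]]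
/-- Edge indices along each Hamiltonian path. -/
def pe : Fin 60 → Fin 4 → Fin 10 := ![![0, 4, 7, 9], ![0, 4, 8, 9], ![0, 5, 7, 8], ![0, 5, 9, 8], ![0, 6, 8, 7], ![0, 6, 9, 7], ![1, 4, 5, 9], ![1, 4, 6, 9], ![1, 7, 5, 6], ![1, 7, 9, 6], ![1, 8, 6, 5], ![1, 8, 9, 5], ![2, 5, 4, 8], ![2, 5, 6, 8], ![2, 7, 4, 6], ![2, 7, 8, 6], ![2, 9, 6, 4], ![2, 9, 8, 4], ![3, 6, 4, 7], ![3, 6, 5, 7], ![3, 8, 4, 5], ![3, 8, 7, 5], ![3, 9, 5, 4], ![3, 9, 7, 4], ![0, 1, 7, 9], ![0, 1, 8, 9], ![0, 2, 7, 8], ![0, 2, 9, 8], ![0, 3, 8, 7], ![0, 3, 9, 7], ![4, 1, 2, 9], ![4, 1, 3, 9], ![4, 7, 2, 3], ![4, 8, 3, 2], ![5, 2, 1, 8], ![5, 2, 3, 8], ![5, 7, 1, 3], ![5, 9, 3, 1], ![6, 3, 1, 7], ![6, 3, 2, 7], ![6, 8, 1, 2], ![6, 9, 2, 1], ![1, 0,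 5, 9], ![1, 0, 6, 9], ![1, 2, 5, 6], ![1, 3, 6, 5], ![4, 0, 2, 9], ![4, 0, 3, 9], ![4, 5, 2, 3], ![4, 6, 3, 2], ![7, 2, 0, 6], ![7, 5, 0, 3], ![8, 3, 0, 5], ![8, 6, 0, 2], ![2, 0, 4, 8], ![2, 1, 4, 6], ![5, 0, 1, 8], ![5, 4, 1, 3], ![7, 1, 0, 6], ![7, 4, 0, 3]]

/-! Nat-level copies of the tables, for fast kernel computation. -/

def p1 (i : Nat) : Nat := match i with
  | 0 => 0 | 1 => 0 | 2 => 0 | 3 => 1 | 4 => 1 | 5 => 1 | 6 => 2 | 7 => 2 | 8 => 2 | 9 => 3 | 10 => 3 | 11 => 3 | 12 => 4 | 13 => 5 | _ => 6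
def p2 (i : Nat) : Nat := match i with
  | 0 => 7 | 1 => 8 | 2 => 9 | 3 => 5 | 4 => 6 | 5 => 9 | 6 => 4 | 7 => 6 | 8 => 8 | 9 => 4 | 10 => 5 | 11 => 7 | 12 => 9 | 13 => 8 | _ => 7
def peT (p a : Nat) : Nat :=
  match p, a with
  | 0,0=>0 | 0,1=>4 | 0,2=>7 | 0,3=>9
  | 1,0=>0 | 1,1=>4 | 1,2=>8 | 1,3=>9
  | 2,0=>0 | 2,1=>5 | 2,2=>7 | 2,3=>8
  | 3,0=>0 | 3,1=>5 | 3,2=>9 | 3,3=>8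
  | 4,0=>0 | 4,1=>6 | 4,2=>8 | 4,3=>7
  | 5,0=>0 | 5,1=>6 | 5,2=>9 | 5,3=>7
  | 6,0=>1 | 6,1=>4 | 6,2=>5 | 6,3=>9
  | 7,0=>1 | 7,1=>4 | 7,2=>6 | 7,3=>9
  | 8,0=>1 | 8,1=>7 | 8,2=>5 | 8,3=>6
  | 9,0=>1 | 9,1=>7 | 9,2=>9 | 9,3=>6
  | 10,0=>1 | 10,1=>8 | 10,2=>6 | 10,3=>5
  | 11,0=>1 | 11,1=>8 | 11,2=>9 | 11,3=>5
  | 12,0=>2 | 12,1=>5 | 12,2=>4 | 12,3=>8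
  | 13,0=>2 | 13,1=>5 | 13,2=>6 | 13,3=>8
  | 14,0=>2 | 14,1=>7 | 14,2=>4 | 14,3=>6
  | 15,0=>2 | 15,1=>7 | 15,2=>8 | 15,3=>6
  | 16,0=>2 | 16,1=>9 | 16,2=>6 | 16,3=>4
  | 17,0=>2 | 17,1=>9 | 17,2=>8 | 17,3=>4
  | 18,0=>3 | 18,1=>6 | 18,2=>4 | 18,3=>7
  | 19,0=>3 | 19,1=>6 | 19,2=>5 | 19,3=>7
  | 20,0=>3 | 20,1=>8 | 20,2=>4 | 20,3=>5
  | 21,0=>3 | 21,1=>8 | 21,2=>7 | 21,3=>5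
  | 22,0=>3 | 22,1=>9 | 22,2=>5 | 22,3=>4
  | 23,0=>3 | 23,1=>9 | 23,2=>7 | 23,3=>4
  | 24,0=>0 | 24,1=>1 | 24,2=>7 | 24,3=>9
  | 25,0=>0 | 25,1=>1 | 25,2=>8 | 25,3=>9
  | 26,0=>0 | 26,1=>2 | 26,2=>7 | 26,3=>8
  | 27,0=>0 | 27,1=>2 | 27,2=>9 | 27,3=>8
  | 28,0=>0 | 28,1=>3 | 28,2=>8 | 28,3=>7
  | 29,0=>0 | 29,1=>3 | 29,2=>9 | 29,3=>7
  | 30,0=>4 | 30,1=>1 | 30,2=>2 | 30,3=>9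
  | 31,0=>4 | 31,1=>1 | 31,2=>3 | 31,3=>9
  | 32,0=>4 | 32,1=>7 | 32,2=>2 | 32,3=>3
  | 33,0=>4 | 33,1=>8 | 33,2=>3 | 33,3=>2
  | 34,0=>5 | 34,1=>2 | 34,2=>1 | 34,3=>8
  | 35,0=>5 | 35,1=>2 | 35,2=>3 | 35,3=>8
  | 36,0=>5 | 36,1=>7 | 36,2=>1 | 36,3=>3
  | 37,0=>5 | 37,1=>9 | 37,2=>3 | 37,3=>1
  | 38,0=>6 | 38,1=>3 | 38,2=>1 | 38,3=>7
  | 39,0=>6 | 39,1=>3 | 39,2=>2 | 39,3=>7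
  | 40,0=>6 | 40,1=>8 | 40,2=>1 | 40,3=>2
  | 41,0=>6 | 41,1=>9 | 41,2=>2 | 41,3=>1
  | 42,0=>1 | 42,1=>0 | 42,2=>5 | 42,3=>9
  | 43,0=>1 | 43,1=>0 | 43,2=>6 | 43,3=>9
  | 44,0=>1 | 44,1=>2 | 44,2=>5 | 44,3=>6
  | 45,0=>1 | 45,1=>3 | 45,2=>6 | 45,3=>5
  | 46,0=>4 | 46,1=>0 | 46,2=>2 | 46,3=>9
  | 47,0=>4 | 47,1=>0 | 47,2=>3 | 47,3=>9
  | 48,0=>4 | 48,1=>5 | 48,2=>2 | 48,3=>3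
  | 49,0=>4 | 49,1=>6 | 49,2=>3 | 49,3=>2
  | 50,0=>7 | 50,1=>2 | 50,2=>0 | 50,3=>6
  | 51,0=>7 | 51,1=>5 | 51,2=>0 | 51,3=>3
  | 52,0=>8 | 52,1=>3 | 52,2=>0 | 52,3=>5
  | 53,0=>8 | 53,1=>6 | 53,2=>0 | 53,3=>2
  | 54,0=>2 | 54,1=>0 | 54,2=>4 | 54,3=>8
  | 55,0=>2 | 55,1=>1 | 55,2=>4 | 55,3=>6
  | 56,0=>5 | 56,1=>0 | 56,2=>1 | 56,3=>8
  | 57,0=>5 | 57,1=>4 | 57,2=>1 | 57,3=>3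
  | 58,0=>7 | 58,1=>1 | 58,2=>0 | 58,3=>6
  | 59,0=>7 | 59,1=>4 | 59,2=>0 | 59,3=>3
  | _,_ => 0

def shareB (i i' : Nat) : Bool :=
  (p1 i == p1 i') || (p1 i == p2 i') || (p2 i == p1 i') || (p2 i == p2 i')

def rowOK (m i : Nat) (K : Nat) : Bool :=
  Nat.rec true (fun k ih => (((i == k) || !(m.testBit k) || !(shareB i k)) && ih : Bool)) K

def matchOK (m : Nat) (K : Nat) : Bool :=
  Nat.rec true (fun i ih => ((!(m.testBit i) || rowOK m i 15) && ih : Bool)) K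

def containsE (p j : Nat) : Bool :=
  (peT p 0 == j) || (peT p 1 == j) || (peT p 2 == j) || (peT p 3 == j)

def inPathB (p i : Nat) : Bool := containsE p (p1 i) && containsE p (p2 i)

def pathAvoid (m p : Nat) (K : Nat) : Bool :=
  Nat.rec true (fun i ih => ((!(m.testBit i) || !(inPathB p i)) && ih : Bool)) K

def findPath (m : Nat) (K : Nat) : Bool :=
  Nat.rec false (fun p ih => (pathAvoid m p 15 || ih : Bool)) K

def checkOne (m : Nat) : Bool := !(matchOK m 15) || findPath m 60

def checkFrom (s : Nat) (K : Nat) : Bool :=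
  Nat.rec true (fun n ih => (checkOne (s + n) && ih : Bool)) K

set_option maxRecDepth 1000000 in
set_option maxHeartbeats 16000000 in
theorem big0 : checkFrom 0 1024 = true := by decide
set_option maxRecDepth 1000000 in
set_option maxHeartbeats 16000000 in
theorem big1 : checkFrom 1024 1024 = true := by decide
set_option maxRecDepth 1000000 in
set_option maxHeartbeats 16000000 in
theorem big2 : checkFrom 2048 1024 = true := by decide
set_option maxRecDepth 1000000 in
set_option maxHeartbeats 16000000 in
theorem big3 : checkFrom 3072 1024 = true := by decide
set_option maxRecDepth 1000000 in
set_option maxHeartbeats 16000000 in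
theorem big4 : checkFrom 4096 1024 = true := by decide
set_option maxRecDepth 1000000 in
set_option maxHeartbeats 16000000 in
theorem big5 : checkFrom 5120 1024 = true := by decide
set_option maxRecDepth 1000000 in
set_option maxHeartbeats 16000000 in
theorem big6 : checkFrom 6144 1024 = true := by decide
set_option maxRecDepth 1000000 in
set_option maxHeartbeats 16000000 in
theorem big7 : checkFrom 7168 1024 = true := by decide
set_option maxRecDepth 1000000 in
set_option maxHeartbeats 16000000 in
theorem big8 : checkFrom 8192 1024 = true := by decide
set_option maxRecDepth 1000000 in
set_option maxHeartbeats 16000000 in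
theorem big9 : checkFrom 9216 1024 = true := by decide
set_option maxRecDepth 1000000 in
set_option maxHeartbeats 16000000 in
theorem big10 : checkFrom 10240 1024 = true := by decide
set_option maxRecDepth 1000000 in
set_option maxHeartbeats 16000000 in
theorem big11 : checkFrom 11264 1024 = true := by decide
set_option maxRecDepth 1000000 in
set_option maxHeartbeats 16000000 in
theorem big12 : checkFrom 12288 1024 = true := by decide
set_option maxRecDepth 1000000 in
set_option maxHeartbeats 16000000 in
theorem big13 : checkFrom 13312 1024 = true := by decide
set_option maxRecDepth 1000000 in
set_option maxHeartbeats 16000000 in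
theorem big14 : checkFrom 14336 1024 = true := by decide
set_option maxRecDepth 1000000 in
set_option maxHeartbeats 16000000 in
theorem big15 : checkFrom 15360 1024 = true := by decide
set_option maxRecDepth 1000000 in
set_option maxHeartbeats 16000000 in
theorem big16 : checkFrom 16384 1024 = true := by decide
set_option maxRecDepth 1000000 in
set_option maxHeartbeats 16000000 in
theorem big17 : checkFrom 17408 1024 = true := by decide
set_option maxRecDepth 1000000 in
set_option maxHeartbeats 16000000 in
theorem big18 : checkFrom 18432 1024 = true := by decide
set_option maxRecDepth 1000000 in
set_option maxHeartbeats 16000000 in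
theorem big19 : checkFrom 19456 1024 = true := by decide
set_option maxRecDepth 1000000 in
set_option maxHeartbeats 16000000 in
theorem big20 : checkFrom 20480 1024 = true := by decide
set_option maxRecDepth 1000000 in
set_option maxHeartbeats 16000000 in
theorem big21 : checkFrom 21504 1024 = true := by decide
set_option maxRecDepth 1000000 in
set_option maxHeartbeats 16000000 in
theorem big22 : checkFrom 22528 1024 = true := by decide
set_option maxRecDepth 1000000 in
set_option maxHeartbeats 16000000 in
theorem big23 : checkFrom 23552 1024 = true := by decide
set_option maxRecDepth 1000000 in
set_option maxHeartbeats 16000000 in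
theorem big24 : checkFrom 24576 1024 = true := by decide
set_option maxRecDepth 1000000 in
set_option maxHeartbeats 16000000 in
theorem big25 : checkFrom 25600 1024 = true := by decide
set_option maxRecDepth 1000000 in
set_option maxHeartbeats 16000000 in
theorem big26 : checkFrom 26624 1024 = true := by decide
set_option maxRecDepth 1000000 in
set_option maxHeartbeats 16000000 in
theorem big27 : checkFrom 27648 1024 = true := by decide
set_option maxRecDepth 1000000 in
set_option maxHeartbeats 16000000 in
theorem big28 : checkFrom 28672 1024 = true := by decide
set_option maxRecDepth 1000000 in
set_option maxHeartbeats 16000000 in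
theorem big29 : checkFrom 29696 1024 = true := by decide
set_option maxRecDepth 1000000 in
set_option maxHeartbeats 16000000 in
theorem big30 : checkFrom 30720 1024 = true := by decide
set_option maxRecDepth 1000000 in
set_option maxHeartbeats 16000000 in
theorem big31 : checkFrom 31744 1024 = true := by decide

/-! Soundness of the checker loops. -/

lemma andE {a b : Bool} (h : (a && b) = true) : a = true ∧ b = true := by simp_all
lemma orE {a b : Bool} (h : (a || b) = true) : a = true ∨ b = true := by simp_all

lemma checkFrom_sound : ∀ (K s : Nat), checkFrom s K = true → ∀ r < K, checkOne (s + r) = true := by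
  intro K
  induction K with
  | zero => intro s _ r hr; omega
  | succ k ih =>
    intro s h r hr
    have h' : (checkOne (s + k) && checkFrom s k) = true := h
    rcases andE h' with ⟨h1, h2⟩
    rcases Nat.lt_succ_iff_lt_or_eq.1 hr with hlt | rfl
    · exact ih s h2 r hlt
    · exact h1

lemma allOne : ∀ m < 32768, checkOne m = true := by
  intro m hm
  have e : 1024 * (m / 1024) + m % 1024 = m := Nat.div_add_mod m 1024
  have hr : m % 1024 < 1024 := Nat.mod_lt _ (by norm_num)
  have ht : m / 1024 < 32 := by omega
  set t := m / 1024 with hts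
  interval_cases t
  · rw [← e]; exact checkFrom_sound 1024 0 big0 _ hr
  · rw [← e]; exact checkFrom_sound 1024 1024 big1 _ hr
  · rw [← e]; exact checkFrom_sound 1024 2048 big2 _ hr
  · rw [← e]; exact checkFrom_sound 1024 3072 big3 _ hr
  · rw [← e]; exact checkFrom_sound 1024 4096 big4 _ hr
  · rw [← e]; exact checkFrom_sound 1024 5120 big5 _ hr
  · rw [← e]; exact checkFrom_sound 1024 6144 big6 _ hr
  · rw [← e]; exact checkFrom_sound 1024 7168 big7 _ hr
  · rw [← e]; exact checkFrom_sound 1024 8192 big8 _ hr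
  · rw [← e]; exact checkFrom_sound 1024 9216 big9 _ hr
  · rw [← e]; exact checkFrom_sound 1024 10240 big10 _ hr
  · rw [← e]; exact checkFrom_sound 1024 11264 big11 _ hr
  · rw [← e]; exact checkFrom_sound 1024 12288 big12 _ hr
  · rw [← e]; exact checkFrom_sound 1024 13312 big13 _ hr
  · rw [← e]; exact checkFrom_sound 1024 14336 big14 _ hr
  · rw [← e]; exact checkFrom_sound 1024 15360 big15 _ hr
  · rw [← e]; exact checkFrom_sound 1024 16384 big16 _ hr
  · rw [← e]; exact checkFrom_sound 1024 17408 big17 _ hr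
  · rw [← e]; exact checkFrom_sound 1024 18432 big18 _ hr
  · rw [← e]; exact checkFrom_sound 1024 19456 big19 _ hr
  · rw [← e]; exact checkFrom_sound 1024 20480 big20 _ hr
  · rw [← e]; exact checkFrom_sound 1024 21504 big21 _ hr
  · rw [← e]; exact checkFrom_sound 1024 22528 big22 _ hr
  · rw [← e]; exact checkFrom_sound 1024 23552 big23 _ hr
  · rw [← e]; exact checkFrom_sound 1024 24576 big24 _ hr
  · rw [← e]; exact checkFrom_sound 1024 25600 big25 _ hr
  · rw [← e]; exact checkFrom_sound 1024 26624 big26 _ hr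
  · rw [← e]; exact checkFrom_sound 1024 27648 big27 _ hr
  · rw [← e]; exact checkFrom_sound 1024 28672 big28 _ hr
  · rw [← e]; exact checkFrom_sound 1024 29696 big29 _ hr
  · rw [← e]; exact checkFrom_sound 1024 30720 big30 _ hr
  · rw [← e]; exact checkFrom_sound 1024 31744 big31 _ hr

lemma rowOK_sound (m i : Nat) :
    ∀ K, rowOK m i K = true → ∀ k < K, m.testBit k = true → i ≠ k → shareB i k = false := by
  intro K
  induction K with
  | zero => intro _ k hk; omega
  | succ K ih =>
    intro h k hk hb hik
    have h' : (((i == K) || !(m.testBit K) || !(shareB i K)) && rowOK m i K) = true := h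
    rcases andE h' with ⟨h1, h2⟩
    rcases Nat.lt_succ_iff_lt_or_eq.1 hk with hlt | rfl
    · exact ih h2 k hlt hb hik
    · rcases orE h1 with h3 | h3
      · rcases orE h3 with h4 | h4
        · exact absurd (by simpa using h4 : i = k) hik
        · rw [hb] at h4; simp at h4
      · simpa using h3

lemma matchOK_sound (m : Nat) :
    ∀ K, matchOK m K = true → ∀ i < K, m.testBit i = true → rowOK m i 15 = true := by
  intro K
  induction K with
  | zero => intro _ i hi; omega
  | succ K ih =>
    intro h i hi hb
    have h' : ((!(m.testBit K) || rowOK m K 15) && matchOK m K) = true := h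
    rcases andE h' with ⟨h1, h2⟩
    rcases Nat.lt_succ_iff_lt_or_eq.1 hi with hlt | rfl
    · exact ih h2 i hlt hb
    · rcases orE h1 with h3 | h3
      · rw [hb] at h3; simp at h3
      · exact h3

lemma pathAvoid_sound (m p : Nat) :
    ∀ K, pathAvoid m p K = true → ∀ i < K, m.testBit i = true → inPathB p i = false := by
  intro K
  induction K with
  | zero => intro _ i hi; omega
  | succ K ih =>
    intro h i hi hb
    have h' : ((!(m.testBit K) || !(inPathB p K)) && pathAvoid m p K) = true := h
    rcases andE h' with ⟨h1, h2⟩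
    rcases Nat.lt_succ_iff_lt_or_eq.1 hi with hlt | rfl
    · exact ih h2 i hlt hb
    · rcases orE h1 with h3 | h3
      · rw [hb] at h3; simp at h3
      · simpa using h3

lemma findPath_sound (m : Nat) :
    ∀ K, findPath m K = true → ∃ p < K, pathAvoid m p 15 = true := by
  intro K
  induction K with
  | zero => intro h; simp [findPath] at h
  | succ K ih =>
    intro h
    have h' : (pathAvoid m K 15 || findPath m K) = true := h
    rcases orE h' with h1 | h1
    · exact ⟨K, Nat.lt_succ_self K, h1⟩
    · obtain ⟨p, hp, hpa⟩ := ih h1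
      exact ⟨p, Nat.lt_succ_of_lt hp, hpa⟩

/-! Encoding a set of disjoint-pair indices as a bitmask. -/

instance : Std.Commutative (fun a b : ℕ => a ||| b) := ⟨Nat.lor_comm⟩
instance : Std.Associative (fun a b : ℕ => a ||| b) := ⟨Nat.lor_assoc⟩

def enc (S : Finset (Fin 15)) : Nat := S.fold (fun a b : ℕ => a ||| b) 0 (fun j : Fin 15 => 2 ^ (j : ℕ))

lemma enc_testBit (S : Finset (Fin 15)) : ∀ i : Fin 15, (enc S).testBit i.1 = true ↔ i ∈ S := by
  classical
  induction S using Finset.induction_on with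
  | empty => intro i; simp [enc, Nat.zero_testBit]
  | @insert a S ha ih =>
    intro i
    rw [enc, Finset.fold_insert ha]
    rw [show (S.fold (fun a b : ℕ => a ||| b) 0 (fun j : Fin 15 => 2 ^ (j : ℕ))) = enc S from rfl]
    rw [Nat.testBit_lor, Finset.mem_insert]
    constructor
    · intro h
      rcases orE h with h1 | h1
      · left
        by_contra hne
        rw [Nat.testBit_two_pow_of_ne (n := (a : ℕ)) (m := (i : ℕ)) (fun hv => hne (Fin.ext hv.symm))] at h1
        exact absurd h1 (by simp)
      · right; exact (ih i).1 h1
    · rintro (rfl | hmem)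
      · rw [Nat.testBit_two_pow_self]; rfl
      · rw [(ih i).2 hmem]; simp
  
lemma enc_lt (S : Finset (Fin 15)) : enc S < 32768 := by
  classical
  induction S using Finset.induction_on with
  | empty => simp [enc]
  | @insert a S ha ih =>
    rw [enc, Finset.fold_insert ha]
    rw [show (S.fold (fun a b : ℕ => a ||| b) 0 (fun j : Fin 15 => 2 ^ (j : ℕ))) = enc S from rfl]
    have h1 : 2 ^ (a : ℕ) < 2 ^ 15 := Nat.pow_lt_pow_right (by norm_num) a.2
    have h2 : enc S < 2 ^ 15 := by norm_num at ih ⊢; exact ih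
    have := Nat.or_lt_two_pow (n := 15) h1 h2
    norm_num at this ⊢; exact this

lemma testBit_lt15 {m i : Nat} (hm : m < 32768) (h : m.testBit i = true) : i < 15 := by
  by_contra hge
  have h215 : (32768 : ℕ) = 2 ^ 15 := by norm_num
  have : m < 2 ^ i := lt_of_lt_of_le (h215 ▸ hm)
    (Nat.pow_le_pow_right (by norm_num) (by omega))
  rw [Nat.testBit_eq_false_of_lt this] at h
  exact absurd h (by simp)

/-! Prop-level relations used in the bridge. -/

def share (i i' : Fin 15) : Prop := shareB i.1 i'.1 = true

def inPath (p : Fin 60) (i : Fin 15) : Prop := inPathB p.1 i.1 = true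

instance (i i' : Fin 15) : Decidable (share i i') := by unfold share; infer_instance
instance (p : Fin 60) (i : Fin 15) : Decidable (inPath p i) := by unfold inPath; infer_instance

/-- The key combinatorial fact, verified by computation: if a set of disjoint pairs of
edges of `K₅` is a partial matching on pairs (no two chosen pairs share an edge),
then some Hamiltonian path of `K₅` avoids using both edges of any chosen pair. -/
theorem key (S : Finset (Fin 15)) (hm : ∀ i ∈ S, ∀ i' ∈ S, i ≠ i' → ¬ share i i') :
    ∃ p : Fin 60, ∀ i ∈ S, ¬ inPath p i := by
  have hbit := enc_testBit S
  have hlt := enc_lt S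
  have h1 : checkOne (enc S) = true := allOne _ hlt
  have hmOK : matchOK (enc S) 15 = true := by
    have hrow : ∀ i K, (∀ k < K, (enc S).testBit k = true → i ≠ k → shareB i k = false) →
        rowOK (enc S) i K = true := by
      intro i K
      induction K with
      | zero => intro _; rfl
      | succ K ih =>
        intro h
        show (((i == K) || !((enc S).testBit K) || !(shareB i K)) && rowOK (enc S) i K) = true
        rw [ih (fun k hk => h k (Nat.lt_succ_of_lt hk))]
        rw [Bool.and_true]
        by_cases hik : i = K
        · simp [hik]
        · by_cases hbK : (enc S).testBit K = true
          · rw [h K (Nat.lt_succ_self K) hbK hik]; simp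
          · rw [Bool.not_eq_true] at hbK; rw [hbK]; simp
    have : ∀ K, (∀ i k, (enc S).testBit i = true → (enc S).testBit k = true → i ≠ k →
        shareB i k = false) → matchOK (enc S) K = true := by
      intro K hcond
      induction K with
      | zero => rfl
      | succ K ih =>
        show ((!((enc S).testBit K) || rowOK (enc S) K 15) && matchOK (enc S) K) = true
        rw [ih, Bool.and_true]
        by_cases hbK : (enc S).testBit K = true
        · rw [hrow K 15 (fun k _ hb hik => hcond K k hbK hb hik)]; simp
        · rw [Bool.not_eq_true] at hbK; rw [hbK]; simp
    apply this
    intro i k hbi hbk hik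
    have hi15 := testBit_lt15 hlt hbi
    have hk15 := testBit_lt15 hlt hbk
    have hiS : (⟨i, hi15⟩ : Fin 15) ∈ S := (hbit ⟨i, hi15⟩).1 hbi
    have hkS : (⟨k, hk15⟩ : Fin 15) ∈ S := (hbit ⟨k, hk15⟩).1 hbk
    have := hm _ hiS _ hkS (fun h => hik (congrArg Fin.val h))
    rw [share] at this
    exact Bool.not_eq_true _ ▸ (Bool.eq_false_iff.2 this)
  have h2 : findPath (enc S) 60 = true := by
    rcases orE h1 with h3 | h3
    · rw [hmOK] at h3; simp at h3
    · exact h3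
  obtain ⟨p, hp60, hpa⟩ := findPath_sound _ 60 h2
  refine ⟨⟨p, hp60⟩, ?_⟩
  intro i hiS hIP
  have hb : (enc S).testBit i.1 = true := (hbit i).2 hiS
  have := pathAvoid_sound (enc S) p 15 hpa i.1 i.2 hb
  rw [inPath] at hIP
  rw [this] at hIP
  exact absurd hIP (by simp)

/-! Small decidable facts about the tables. -/

def shareV (j k : Fin 10) : Prop :=
  (ev j).1 = (ev k).1 ∨ (ev j).1 = (ev k).2 ∨ (ev j).2 = (ev k).1 ∨ (ev j).2 = (ev k).2

instance (j k : Fin 10) : Decidable (shareV j k) := by unfold shareV; infer_instance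

lemma shareV_iff (j k : Fin 10) : shareV j k ↔ ∃ v, v ∈ ed j ∧ v ∈ ed k := by
  simp only [shareV, ed, Sym2.mem_iff]
  constructor
  · rintro (h|h|h|h)
    · exact ⟨(ev j).1, Or.inl rfl, Or.inl h⟩
    · exact ⟨(ev j).1, Or.inl rfl, Or.inr h⟩
    · exact ⟨(ev j).2, Or.inr rfl, Or.inl h⟩
    · exact ⟨(ev j).2, Or.inr rfl, Or.inr h⟩
  · rintro ⟨v, (rfl|rfl), (h|h)⟩ <;> simp [shareV, h]

lemma edMem (j : Fin 10) : ed j ∈ (⊤ : SimpleGraph (Fin 5)).edgeSet := by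
  rw [ed, SimpleGraph.mem_edgeSet, SimpleGraph.top_adj]
  revert j; decide

lemma edInj : ∀ j k : Fin 10, j ≠ k → ed j ≠ ed k := by decide

lemma factA : ∀ j k : Fin 10, j ≠ k → ¬ shareV j k →
    ∃ i : Fin 15, (pet1 i = j ∧ pet2 i = k) ∨ (pet1 i = k ∧ pet2 i = j) := by decide

lemma factB : ∀ i i' : Fin 15, i ≠ i' → share i i' →
    ∃ j k l : Fin 10, k ≠ l ∧ shareV k l ∧
      ((pet1 i = j ∧ pet2 i = k) ∨ (pet1 i = k ∧ pet2 i = j)) ∧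
      ((pet1 i' = j ∧ pet2 i' = l) ∨ (pet1 i' = l ∧ pet2 i' = j)) := by decide

lemma factC : ∀ (p : Fin 60) (a : Fin 4),
    ed (pe p a) = s(pv p a.castSucc, pv p a.succ) := by decide

lemma factD : ∀ p : Fin 60, ∀ x y : Fin 5, pv p x = pv p y → x = y := by decide

lemma factE : ∀ p : Fin 60, ∀ a b : Fin 4, a ≠ b → pe p a ≠ pe p b := by decide

lemma inPath_intro : ∀ (p : Fin 60) (i : Fin 15),
    ((∃ a, pe p a = pet1 i) ∧ (∃ a, pe p a = pet2 i)) → inPath p i := by decide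

/-- Every proper edge-coloring of `K_5` contains a rainbow path with `4` edges. -/
theorem K5_rainbow_P4 {β : Type*} (c : Sym2 (Fin 5) → β)
    (hc : IsProperEdgeColoring (⊤ : SimpleGraph (Fin 5)) c) :
    HasRainbowCopy (pathGraph 5) (⊤ : SimpleGraph (Fin 5)) c := by
  classical
  set S : Finset (Fin 15) := univ.filter (fun i => c (ed (pet1 i)) = c (ed (pet2 i))) with hS
  have hmem : ∀ i, i ∈ S ↔ c (ed (pet1 i)) = c (ed (pet2 i)) := by
    intro i; simp [hS]
  have hmatch : ∀ i ∈ S, ∀ i' ∈ S, i ≠ i' → ¬ share i i' := by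
    intro i hi i' hi' hne hsh
    obtain ⟨j, k, l, hkl, hV, hi1, hi2⟩ := factB i i' hne hsh
    have e1 : c (ed j) = c (ed k) := by
      have := (hmem i).1 hi
      rcases hi1 with ⟨h1, h2⟩ | ⟨h1, h2⟩
      · rw [h1, h2] at this; exact this
      · rw [h1, h2] at this; exact this.symm
    have e2 : c (ed j) = c (ed l) := by
      have := (hmem i').1 hi'
      rcases hi2 with ⟨h1, h2⟩ | ⟨h1, h2⟩
      · rw [h1, h2] at this; exact this
      · rw [h1, h2] at this; exact this.symm
    exact hc (edMem k) (edMem l) (edInj k l hkl) ((shareV_iff k l).1 hV)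
      (e1.symm.trans e2)
  obtain ⟨p, hp⟩ := key S hmatch
  refine ⟨⟨pv p, factD p⟩, ?_, ?_⟩
  · intro a b hab
    simp only [SimpleGraph.top_adj]
    exact fun h => (SimpleGraph.Adj.ne hab) (factD p a b h)
  · intro e1 he1 e2 he2 hcc
    have hchar : ∀ e ∈ (pathGraph 5).edgeSet, ∃ a : Fin 4,
        e = s((a.castSucc : Fin 5), (a.succ : Fin 5)) := by
      intro e
      induction e using Sym2.ind with
      | _ u v =>
        intro he
        rw [SimpleGraph.mem_edgeSet, pathGraph_adj] at he
        rcases he with h | h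
        · have hu : (u : ℕ) < 4 := by omega
          refine ⟨⟨(u : ℕ), hu⟩, ?_⟩
          rw [show ((⟨(u : ℕ), hu⟩ : Fin 4)).castSucc = u from Fin.ext rfl,
            show ((⟨(u : ℕ), hu⟩ : Fin 4)).succ = v from Fin.ext h]
        · have hv : (v : ℕ) < 4 := by omega
          refine ⟨⟨(v : ℕ), hv⟩, Sym2.eq_swap.trans ?_⟩
          rw [show ((⟨(v : ℕ), hv⟩ : Fin 4)).castSucc = v from Fin.ext rfl,
            show ((⟨(v : ℕ), hv⟩ : Fin 4)).succ = u from Fin.ext h]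
    obtain ⟨a1, rfl⟩ := hchar e1 he1
    obtain ⟨a2, rfl⟩ := hchar e2 he2
    have hmap : ∀ a : Fin 4,
        Sym2.map (pv p) s((a.castSucc : Fin 5), (a.succ : Fin 5)) = ed (pe p a) := by
      intro a; rw [Sym2.map_pair_eq, factC]
    by_contra hne
    have ha : a1 ≠ a2 := fun h => hne (by rw [h])
    have hcc' : c (ed (pe p a1)) = c (ed (pe p a2)) := by
      rw [← hmap a1, ← hmap a2]; exact hcc
    have hjk : pe p a1 ≠ pe p a2 := factE p a1 a2 ha
    by_cases hsv : shareV (pe p a1) (pe p a2)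
    · exact hc (edMem _) (edMem _) (edInj _ _ hjk) ((shareV_iff _ _).1 hsv) hcc'
    · obtain ⟨i, hi⟩ := factA _ _ hjk hsv
      have hiS : i ∈ S := by
        rw [hmem]
        rcases hi with ⟨h1, h2⟩ | ⟨h1, h2⟩
        · rw [h1, h2]; exact hcc'
        · rw [h1, h2]; exact hcc'.symm
      refine hp i hiS (inPath_intro p i ?_)
      rcases hi with ⟨h1, h2⟩ | ⟨h1, h2⟩
      · exact ⟨⟨a1, h1 ▸ rfl⟩, ⟨a2, h2 ▸ rfl⟩⟩
      · exact ⟨⟨a2, h1 ▸ rfl⟩, ⟨a1, h2 ▸ rfl⟩⟩
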